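/- Let γ ∈ [0,1), let (φ_t)_{t≥0} and (ψ_t)_{t≥0} be sequences in ℝ^d with ‖ψ_t‖ ≤ M for all t, satisfying the approximate Bellman relation ‖φ_t + γψ_{t+1} − ψ_t‖ ≤ ε for all t. Then for every T ≥ 1 and every z ∈ ℝ^d: ‖(1/T) Σ_{t=0}^{T−1} φ_t − z‖ ≤ sup_t ‖(1−γ)ψ_t − z‖ + ε + (2Mγ)/T. -/

import Mathlib

theorem stmt_10 (d : ℕ) (γ ε M : ℝ) (hγ0 : 0 ≤ γ) (hγ1 : γ < 1) (hε : 0 ≤ ε)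
    (φ ψ : ℕ → EuclideanSpace ℝ (Fin d))
    (hM : ∀ t, ‖ψ t‖ ≤ M)
    (hbell : ∀ t, ‖φ t + γ • ψ (t + 1) - ψ t‖ ≤ ε)
    (z : EuclideanSpace ℝ (Fin d)) :
    ∀ T : ℕ, 1 ≤ T →
      ‖(T : ℝ)⁻¹ • (∑ t ∈ Finset.range T, φ t) - z‖ ≤
        (⨆ t : ℕ, ‖(1 - γ) • ψ t - z‖) + ε + (2 * M * γ) / T := by
  intro T hT
  have hTpos : (0 : ℝ) < T := by exact_mod_cast hT
  have hTne : (T : ℝ) ≠ 0 := ne_of_gt hTpos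
  set S := ⨆ t : ℕ, ‖(1 - γ) • ψ t - z‖ with hS
  have hbdd : BddAbove (Set.range fun t : ℕ => ‖(1 - γ) • ψ t - z‖) := by
    refine ⟨(1 - γ) * M + ‖z‖, ?_⟩
    rintro x ⟨t, rfl⟩
    calc ‖(1 - γ) • ψ t - z‖ ≤ ‖(1 - γ) • ψ t‖ + ‖z‖ := norm_sub_le _ _
      _ ≤ (1 - γ) * M + ‖z‖ := by
          have : ‖(1 - γ) • ψ t‖ = (1 - γ) * ‖ψ t‖ := by
            rw [norm_smul, Real.norm_eq_abs, abs_of_nonneg (by linarith)]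
          rw [this]
          have := hM t
          nlinarith [norm_nonneg (ψ t)]
  have hle : ∀ t : ℕ, ‖(1 - γ) • ψ t - z‖ ≤ S := fun t => le_ciSup hbdd t
  -- key decomposition
  have key : (∑ t ∈ Finset.range T, φ t) - (T : ℝ) • z =
      (∑ t ∈ Finset.range T, ((1 - γ) • ψ t - z)) + (γ • ψ 0 - γ • ψ T) +
      ∑ t ∈ Finset.range T, (φ t + γ • ψ (t + 1) - ψ t) := by
    have tel : ∑ t ∈ Finset.range T, (γ • ψ t - γ • ψ (t + 1)) = γ • ψ 0 - γ • ψ T :=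
      Finset.sum_range_sub' (fun t => γ • ψ t) T
    rw [← tel, ← Finset.sum_add_distrib, ← Finset.sum_add_distrib]
    have : (T : ℝ) • z = ∑ _t ∈ Finset.range T, z := by
      simp [Finset.sum_const, Nat.cast_smul_eq_nsmul ℝ]
    rw [this, ← Finset.sum_sub_distrib]
    refine Finset.sum_congr rfl fun t _ => ?_
    have : ((1:ℝ) - γ) • ψ t = ψ t - γ • ψ t := by
      rw [sub_smul, one_smul]
    rw [this]; abel
  have hnorm1 : ‖∑ t ∈ Finset.range T, ((1 - γ) • ψ t - z)‖ ≤ (T : ℝ) * S := by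
    calc ‖∑ t ∈ Finset.range T, ((1 - γ) • ψ t - z)‖
        ≤ ∑ t ∈ Finset.range T, ‖(1 - γ) • ψ t - z‖ := norm_sum_le _ _
      _ ≤ ∑ _t ∈ Finset.range T, S := Finset.sum_le_sum fun t _ => hle t
      _ = (T : ℝ) * S := by simp [mul_comm]
  have hnorm2 : ‖γ • ψ 0 - γ • ψ T‖ ≤ 2 * M * γ := by
    calc ‖γ • ψ 0 - γ • ψ T‖ ≤ ‖γ • ψ 0‖ + ‖γ • ψ T‖ := norm_sub_le _ _
      _ = γ * ‖ψ 0‖ + γ * ‖ψ T‖ := by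
          rw [norm_smul, norm_smul, Real.norm_eq_abs, abs_of_nonneg hγ0]
      _ ≤ 2 * M * γ := by nlinarith [hM 0, hM T, norm_nonneg (ψ 0), norm_nonneg (ψ T)]
  have hnorm3 : ‖∑ t ∈ Finset.range T, (φ t + γ • ψ (t + 1) - ψ t)‖ ≤ (T : ℝ) * ε := by
    calc ‖∑ t ∈ Finset.range T, (φ t + γ • ψ (t + 1) - ψ t)‖
        ≤ ∑ t ∈ Finset.range T, ‖φ t + γ • ψ (t + 1) - ψ t‖ := norm_sum_le _ _
      _ ≤ ∑ _t ∈ Finset.range T, ε := Finset.sum_le_sum fun t _ => hbell t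
      _ = (T : ℝ) * ε := by simp [mul_comm]
  have hrw : (T : ℝ)⁻¹ • (∑ t ∈ Finset.range T, φ t) - z =
      (T : ℝ)⁻¹ • ((∑ t ∈ Finset.range T, φ t) - (T : ℝ) • z) := by
    rw [smul_sub, smul_smul, inv_mul_cancel₀ hTne, one_smul]
  rw [hrw, key]
  calc ‖(T : ℝ)⁻¹ • ((∑ t ∈ Finset.range T, ((1 - γ) • ψ t - z)) + (γ • ψ 0 - γ • ψ T) +
        ∑ t ∈ Finset.range T, (φ t + γ • ψ (t + 1) - ψ t))‖
      = (T : ℝ)⁻¹ * ‖(∑ t ∈ Finset.range T, ((1 - γ) • ψ t - z)) + (γ • ψ 0 - γ • ψ T) +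
        ∑ t ∈ Finset.range T, (φ t + γ • ψ (t + 1) - ψ t)‖ := by
        rw [norm_smul, Real.norm_eq_abs, abs_of_pos (inv_pos.mpr hTpos)]
    _ ≤ (T : ℝ)⁻¹ * ((T : ℝ) * S + 2 * M * γ + (T : ℝ) * ε) := by
        refine mul_le_mul_of_nonneg_left ?_ (le_of_lt (inv_pos.mpr hTpos))
        calc _ ≤ ‖(∑ t ∈ Finset.range T, ((1 - γ) • ψ t - z)) + (γ • ψ 0 - γ • ψ T)‖ +
              ‖∑ t ∈ Finset.range T, (φ t + γ • ψ (t + 1) - ψ t)‖ := norm_add_le _ _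
          _ ≤ ‖∑ t ∈ Finset.range T, ((1 - γ) • ψ t - z)‖ + ‖γ • ψ 0 - γ • ψ T‖ +
              ‖∑ t ∈ Finset.range T, (φ t + γ • ψ (t + 1) - ψ t)‖ := by
                gcongr; exact norm_add_le _ _
          _ ≤ (T : ℝ) * S + 2 * M * γ + (T : ℝ) * ε := by gcongr
    _ = S + ε + 2 * M * γ / T := by field_simp; ring
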